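/- Let f be a real number with −1/2 < f < 0 and set y* = −f/(1+f), so 0 < y* < 1. Then for every real r with 0 < r < min(y*, 1−y*), one has (2πi)^{−1}·∮_{|y−y*|=r} θ(y)·Ψ̂_1(y;f) dy = 1/(f(1+f)). Equivalently, the residue of θ(y)Ψ_1(y;f) at the ramification point y = −f/(1+f) equals −1/(f(1+f)). -/

import Mathlib

set_option maxHeartbeats 1000000


open Complex

/-- The functions `Ψ̂_n(·;f)`, defined recursively by
`Ψ̂_0(y;f) = -1/(f+(f+1)y)^2` and
`Ψ̂_n(y;f) = -(d/dy)[Ψ̂_{n-1}(y;f) · y(y+1)/(f+(f+1)y)]`. -/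
noncomputable def PsiHat (f : ℂ) : ℕ → ℂ → ℂ
  | 0 => fun y => -1 / (f + (f + 1) * y) ^ 2
  | n + 1 => fun y =>
      -deriv (fun w => PsiHat f n w * (w * (w + 1) / (f + (f + 1) * w))) y

/-- The primitive `θ(y) = (f/2)(log y)^2 + (log y)·log(1+y) + Li₂(-y)`,
with `log` the principal branch and `Li₂(w) = ∑_{k≥1} w^k/k^2`. -/
noncomputable def theta (f : ℂ) (y : ℂ) : ℂ :=
  f / 2 * Complex.log y ^ 2 + Complex.log y * Complex.log (1 + y) +
    ∑' k : ℕ, (-y) ^ (k + 1) / ((k : ℂ) + 1) ^ 2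



lemma li2_hasDerivAt {y : ℂ} (hy : ‖y‖ < 1) (hy0 : y ≠ 0) :
    HasDerivAt (fun z : ℂ => ∑' k : ℕ, (-z) ^ (k + 1) / ((k : ℂ) + 1) ^ 2)
      (-(Complex.log (1 + y) / y)) y := by
  set ρ : ℝ := (1 + ‖y‖) / 2 with hρ
  have hρ0 : 0 < ρ := by positivity
  have hρ1 : ρ < 1 := by rw [hρ]; linarith
  have hyρ : y ∈ Metric.ball (0 : ℂ) ρ := by
    rw [Metric.mem_ball, dist_zero_right, hρ]; linarith
  have key : HasDerivAt (fun z : ℂ => ∑' k : ℕ, (-z) ^ (k + 1) / ((k : ℂ) + 1) ^ 2)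
      (∑' k : ℕ, (-(-y) ^ k / ((k : ℂ) + 1))) y := by
    refine hasDerivAt_tsum_of_isPreconnected
      (g := fun (k : ℕ) (z : ℂ) => (-z) ^ (k + 1) / ((k : ℂ) + 1) ^ 2)
      (g' := fun (k : ℕ) (z : ℂ) => -(-z) ^ k / ((k : ℂ) + 1))
      (u := fun k : ℕ => ρ ^ k) (y₀ := 0)
      (summable_geometric_of_lt_one hρ0.le hρ1) Metric.isOpen_ball
      (convex_ball (0:ℂ) ρ).isPreconnected ?_ ?_
      (Metric.mem_ball_self hρ0) ?_ hyρ
    · intro n z hz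
      have h1 : HasDerivAt (fun z : ℂ => (-z) ^ (n + 1))
          ((↑(n+1) : ℂ) * (-z) ^ n * (-1)) z := by
        simpa using ((hasDerivAt_id' z).fun_neg.fun_pow (n + 1))
      have h2 := h1.div_const (((n : ℂ) + 1) ^ 2)
      have hn : ((n : ℂ) + 1) ≠ 0 := Nat.cast_add_one_ne_zero n
      convert h2 using 1
      · rfl
      push_cast
      field_simp
    · intro n z hz
      rw [Metric.mem_ball, dist_zero_right] at hz
      have h1 : ‖-(-z) ^ n / ((n : ℂ) + 1)‖ = ‖z‖ ^ n / (n + 1) := by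
        rw [norm_div, norm_neg, norm_pow, norm_neg]
        congr 1
        have : ((n : ℂ) + 1) = ((n + 1 : ℕ) : ℂ) := by push_cast; ring
        rw [this, Complex.norm_natCast]
        push_cast; ring
      rw [h1]
      calc ‖z‖ ^ n / (n + 1) ≤ ‖z‖ ^ n / 1 := by
            apply div_le_div_of_nonneg_left (by positivity) one_pos ?_ |>.trans_eq ?_
            · exact_mod_cast Nat.succ_le_succ (Nat.zero_le n)
            · rfl
        _ = ‖z‖ ^ n := div_one _
        _ ≤ ρ ^ n := pow_le_pow_left₀ (norm_nonneg z) hz.le n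
    · apply Summable.congr summable_zero
      intro n; simp
  convert key using 1
  -- identify the sum
  have H : HasSum (fun n : ℕ => (-1) ^ (n + 1) * y ^ n / (n : ℂ)) (Complex.log (1 + y)) :=
    Complex.hasSum_taylorSeries_log hy
  have H1 : HasSum (fun n : ℕ => (-1) ^ (n + 1 + 1) * y ^ (n + 1) / ((n : ℂ) + 1))
      (Complex.log (1 + y)) := by
    have h0 := (hasSum_nat_add_iff'
      (f := fun n : ℕ => (-1) ^ (n + 1) * y ^ n / (n : ℂ)) 1
      (g := Complex.log (1 + y)))
    rw [Finset.sum_range_one] at h0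
    simp only [Nat.cast_zero, div_zero, sub_zero] at h0
    have := h0.mpr H
    convert this using 2 with n
    · rfl
    push_cast; ring_nf
  have H2 : HasSum (fun n : ℕ => (-y) * (-(-y) ^ n / ((n : ℂ) + 1)))
      (Complex.log (1 + y)) := by
    convert H1 using 2 with n
    rw [neg_pow]
    ring
  have hny : (-y) ≠ 0 := neg_ne_zero.mpr hy0
  have H3 := H2.mul_left (-y)⁻¹
  simp only [inv_mul_cancel_left₀ hny] at H3
  rw [H3.tsum_eq]
  rw [inv_neg]
  field_simp

lemma theta_hasDerivAt {f y : ℂ} (h1 : y ∈ Complex.slitPlane)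
    (h2 : (1 + y) ∈ Complex.slitPlane) (hnorm : ‖y‖ < 1) :
    HasDerivAt (theta f) (Complex.log y * (f + (f + 1) * y) / (y * (y + 1))) y := by
  have hy0 : y ≠ 0 := Complex.slitPlane_ne_zero h1
  have hy1 : (1 : ℂ) + y ≠ 0 := Complex.slitPlane_ne_zero h2
  have hy1' : y + 1 ≠ 0 := by rwa [add_comm] at hy1
  have hlog : HasDerivAt Complex.log y⁻¹ y := Complex.hasDerivAt_log h1
  have hlog1 : HasDerivAt (fun z : ℂ => Complex.log (1 + z)) ((1 + y)⁻¹) y := by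
    have := ((hasDerivAt_id' y).const_add 1).clog h2
    simpa using this
  have hA : HasDerivAt (fun z : ℂ => f / 2 * Complex.log z ^ 2)
      (f * Complex.log y * y⁻¹) y := by
    have := (hlog.fun_pow 2).const_mul (f / 2)
    refine this.congr_deriv ?_
    norm_num
    ring
  have hB := hlog.mul hlog1
  have hC := li2_hasDerivAt hnorm hy0
  have H := (hA.add hB).add hC
  have hd : f * Complex.log y * y⁻¹ +
      (y⁻¹ * Complex.log (1 + y) + Complex.log y * (1 + y)⁻¹) +
      -(Complex.log (1 + y) / y) =
      Complex.log y * (f + (f + 1) * y) / (y * (y + 1)) := by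
    field_simp
    ring
  exact hd ▸ H

lemma aux_rest {L a c u : ℂ} (ha : a ≠ 0) (hc : c ≠ 0) (hy : c + u ≠ 0) (hu : u ≠ 0) :
    L / (a ^ 2 * u ^ 2) + (a ^ 2)⁻¹ * (((c + u)⁻¹ * u - L * 1) / u ^ 2) +
      (a ^ 2)⁻¹ * c⁻¹ * (c + u)⁻¹ = (a ^ 2)⁻¹ * c⁻¹ * u⁻¹ := by
  have hne : (a ^ 4 * c * u ^ 4 + a ^ 4 * u ^ 5) ≠ 0 := by
    have h := mul_ne_zero (mul_ne_zero (pow_ne_zero 4 ha) (pow_ne_zero 4 hu)) hy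
    rwa [show a ^ 4 * u ^ 4 * (c + u) = a ^ 4 * c * u ^ 4 + a ^ 4 * u ^ 5 from by ring] at h
  have hT : (a ^ 4 * c * u ^ 4 + a ^ 4 * u ^ 5) * (a ^ 4 * c * u ^ 4 + a ^ 4 * u ^ 5)⁻¹ = 1 :=
    mul_inv_cancel₀ hne
  field_simp
  ring


/-- Lemma 3.2, `n = 1` case: the residue of `θ(y)Ψ_1(y;f)` at the ramification
point `y* = -f/(1+f)` equals `-1/(f(1+f))`; equivalently
`(2πi)⁻¹ ∮ θ(y) Ψ̂_1(y;f) dy = 1/(f(1+f))` over small circles around `y*`. -/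
theorem residue_theta_psi_one
    (f : ℝ) (hf₁ : -1/2 < f) (hf₂ : f < 0) (r : ℝ) (hr : 0 < r)
    (hr' : r < min (-f / (1 + f)) (1 - -f / (1 + f))) :
    (2 * Real.pi * Complex.I)⁻¹ *
      (∮ y in C(((-f / (1 + f) : ℝ) : ℂ), r),
        theta (f : ℂ) y * PsiHat (f : ℂ) 1 y) =
      1 / ((f : ℂ) * (1 + (f : ℂ))) := by
  have hf3 : (0:ℝ) < 1 + f := by linarith
  set s : ℝ := -f / (1 + f) with hs
  have hs0 : 0 < s := div_pos (by linarith) hf3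
  have hs1 : s < 1 := by rw [hs, div_lt_one hf3]; linarith
  have hrs : r < s := lt_of_lt_of_le hr' (min_le_left _ _)
  have hrs1 : r < 1 - s := lt_of_lt_of_le hr' (min_le_right _ _)
  set F : ℂ := (f : ℂ) with hFdef
  set c : ℂ := ((s : ℝ) : ℂ) with hcdef
  have hF0 : F ≠ 0 := ofReal_ne_zero.mpr (ne_of_lt hf₂)
  have ha : F + 1 ≠ 0 := by
    have h : ((1 + f : ℝ) : ℂ) ≠ 0 := ofReal_ne_zero.mpr (ne_of_gt hf3)
    push_cast at h
    rwa [add_comm] at h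
  have hcne : c ≠ 0 := ofReal_ne_zero.mpr hs0.ne'
  have hcF : F + (F + 1) * c = 0 := by
    have h1 : c = -F / (F + 1) := by
      rw [hcdef, hs, hFdef]; push_cast; ring
    rw [h1]; field_simp; ring
  -- pointwise facts on the sphere
  have hre : ∀ y ∈ Metric.sphere c r, s - r ≤ y.re ∧ y.re - s ≤ r := by
    intro y hy
    rw [Metric.mem_sphere, Complex.dist_eq] at hy
    have h1 : |(y - c).re| ≤ ‖y - c‖ := Complex.abs_re_le_norm _
    rw [hy] at h1
    have h2 : (y - c).re = y.re - s := by simp [hcdef, Complex.sub_re]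
    rw [h2] at h1
    constructor <;> [linarith [abs_le.mp h1]; linarith [abs_le.mp h1]]
  have hslit : ∀ y ∈ Metric.sphere c r, y ∈ Complex.slitPlane := by
    intro y hy
    exact Or.inl (by have := (hre y hy).1; linarith)
  have h1slit : ∀ y ∈ Metric.sphere c r, (1 + y) ∈ Complex.slitPlane := by
    intro y hy
    refine Or.inl ?_
    have := (hre y hy).1
    simp only [Complex.add_re, Complex.one_re]
    linarith
  have hy0 : ∀ y ∈ Metric.sphere c r, y ≠ 0 := fun y hy =>
    Complex.slitPlane_ne_zero (hslit y hy)
  have hy1 : ∀ y ∈ Metric.sphere c r, y + 1 ≠ 0 := by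
    intro y hy h
    have h2 := (hre y hy).1
    have : (y + 1).re = y.re + 1 := by simp
    rw [h] at this
    simp at this
    linarith
  have hnorm : ∀ y ∈ Metric.sphere c r, ‖y‖ < 1 := by
    intro y hy
    rw [Metric.mem_sphere, Complex.dist_eq] at hy
    calc ‖y‖ = ‖c + (y - c)‖ := by rw [add_sub_cancel]
      _ ≤ ‖c‖ + ‖y - c‖ := norm_add_le _ _
      _ = |s| + r := by rw [hy, hcdef, Complex.norm_real, Real.norm_eq_abs]
      _ = s + r := by rw [abs_of_pos hs0]
      _ < 1 := by linarith
  have hyc : ∀ y ∈ Metric.sphere c r, y - c ≠ 0 := by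
    intro y hy h
    rw [Metric.mem_sphere, Complex.dist_eq, h] at hy
    simp at hy
    exact hr.ne' hy.symm
  have hDfac : ∀ y : ℂ, F + (F + 1) * y = (F + 1) * (y - c) := by
    intro y; linear_combination hcF
  have hD : ∀ y ∈ Metric.sphere c r, F + (F + 1) * y ≠ 0 := by
    intro y hy
    rw [hDfac y]
    exact mul_ne_zero ha (hyc y hy)
  -- the explicit derivative of g(w) = w(w+1)/(F+(F+1)w)^3
  set G : ℂ → ℂ := fun z =>
    ((2 * z + 1) * (F + (F + 1) * z) - 3 * (F + 1) * z * (z + 1)) /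
      (F + (F + 1) * z) ^ 4 with hGdef
  have hgd : ∀ y ∈ Metric.sphere c r,
      HasDerivAt (fun w : ℂ => w * (w + 1) / (F + (F + 1) * w) ^ 3) (G y) y := by
    intro y hy
    have hb : HasDerivAt (fun w : ℂ => F + (F + 1) * w) (F + 1) y := by
      simpa using ((hasDerivAt_id y).const_mul (F + 1)).const_add F
    have hN : HasDerivAt (fun w : ℂ => w * (w + 1)) (1 * (y + 1) + y * 1) y :=
      (hasDerivAt_id y).mul ((hasDerivAt_id y).add_const 1)
    have h := hN.div (hb.pow 3) (pow_ne_zero 3 (hD y hy))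
    refine h.congr_deriv ?_
    rw [hGdef]
    have hDy := hD y hy
    simp only [Pi.pow_apply]
    push_cast
    field_simp
    ring
  have hPsi : ∀ y ∈ Metric.sphere c r, PsiHat F 1 y = G y := by
    intro y hy
    have h1 : PsiHat F 1 y =
        -deriv (fun w => PsiHat F 0 w * (w * (w + 1) / (F + (F + 1) * w))) y := rfl
    have h2 : (fun w => PsiHat F 0 w * (w * (w + 1) / (F + (F + 1) * w))) =
        fun w => -(w * (w + 1) / (F + (F + 1) * w) ^ 3) := by
      funext w
      show (-1 / (F + (F + 1) * w) ^ 2) * (w * (w + 1) / (F + (F + 1) * w)) = _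
      rw [div_mul_div_comm, neg_one_mul, neg_div, ← pow_succ]
    rw [h1, h2, deriv.fun_neg, neg_neg]
    exact (hgd y hy).deriv
  -- the coefficient and the antiderivative
  set K : ℂ := ((F + 1) ^ 2)⁻¹ * c⁻¹ with hKdef
  set W : ℂ → ℂ := fun y => theta F y * G y + K * (y - c)⁻¹ with hWdef
  set H : ℂ → ℂ := fun y =>
    theta F y * (y * (y + 1) / (F + (F + 1) * y) ^ 3) +
      ((F + 1) ^ 2)⁻¹ * (Complex.log y / (y - c)) + K * Complex.log y with hHdef
  have hθ : ∀ y ∈ Metric.sphere c r,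
      HasDerivAt (theta F) (Complex.log y * (F + (F + 1) * y) / (y * (y + 1))) y :=
    fun y hy => theta_hasDerivAt (hslit y hy) (h1slit y hy) (hnorm y hy)
  have hH : ∀ y ∈ Metric.sphere c r, HasDerivAt H (W y) y := by
    intro y hy
    have hprod := (hθ y hy).mul (hgd y hy)
    have hq : HasDerivAt (fun w : ℂ => Complex.log w / (w - c))
        ((y⁻¹ * (y - c) - Complex.log y * 1) / (y - c) ^ 2) y :=
      (Complex.hasDerivAt_log (hslit y hy)).div
        ((hasDerivAt_id y).sub_const c) (hyc y hy)
    have hq' := hq.const_mul (((F + 1) ^ 2)⁻¹)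
    have hl := (Complex.hasDerivAt_log (hslit y hy)).const_mul K
    have total := (hprod.add hq').add hl
    have h1 := hy0 y hy
    have h2 := hy1 y hy
    have h3 := hyc y hy
    have hθg : Complex.log y * (F + (F + 1) * y) / (y * (y + 1)) *
          (y * (y + 1) / (F + (F + 1) * y) ^ 3) =
        Complex.log y / ((F + 1) ^ 2 * (y - c) ^ 2) := by
      rw [hDfac y]
      field_simp
    have hrest : Complex.log y / ((F + 1) ^ 2 * (y - c) ^ 2) +
        ((F + 1) ^ 2)⁻¹ * ((y⁻¹ * (y - c) - Complex.log y * 1) / (y - c) ^ 2) +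
        K * y⁻¹ = K * (y - c)⁻¹ := by
      rw [hKdef]
      have h5 := aux_rest (L := Complex.log y) (a := F + 1) (c := c) (u := y - c)
        ha hcne (by rw [show c + (y - c) = y from by ring]; exact h1) h3
      rw [show c + (y - c) = y from by ring] at h5
      exact h5
    have hde : Complex.log y * (F + (F + 1) * y) / (y * (y + 1)) *
          (y * (y + 1) / (F + (F + 1) * y) ^ 3) + theta F y * G y +
        ((F + 1) ^ 2)⁻¹ * ((y⁻¹ * (y - c) - Complex.log y * 1) / (y - c) ^ 2) +
        K * y⁻¹ = W y := by
      rw [hWdef, hθg]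
      dsimp only
      linear_combination hrest
    exact hde ▸ total
  -- continuity facts
  have hθc : ContinuousOn (theta F) (Metric.sphere c r) := fun y hy =>
    ((hθ y hy).continuousAt).continuousWithinAt
  have hGc : ContinuousOn G (Metric.sphere c r) := by
    rw [hGdef]
    apply ContinuousOn.div
    · fun_prop
    · fun_prop
    · exact fun y hy => pow_ne_zero 4 (hD y hy)
  have hIc : ContinuousOn (fun y : ℂ => K * (y - c)⁻¹) (Metric.sphere c r) := by
    apply ContinuousOn.mul continuousOn_const
    exact ContinuousOn.inv₀ (by fun_prop) (fun y hy => hyc y hy)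
  have hWc : ContinuousOn W (Metric.sphere c r) := by
    rw [hWdef]; exact (hθc.mul hGc).add hIc
  have hWint : CircleIntegrable W c r := hWc.circleIntegrable hr.le
  have hIint : CircleIntegrable (fun y : ℂ => K • (y - c)⁻¹) c r := by
    apply ContinuousOn.circleIntegrable hr.le
    simpa [smul_eq_mul] using hIc
  -- the main computation
  have hW0 : (∮ z in C(c, r), W z) = 0 :=
    circleIntegral.integral_eq_zero_of_hasDerivWithinAt hr.le
      (fun z hz => ((hH z hz)).hasDerivWithinAt)
  have hEqOn : Set.EqOn (fun y => theta F y * PsiHat F 1 y)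
      (fun y => W y - K • (y - c)⁻¹) (Metric.sphere c r) := by
    intro y hy
    simp only [hWdef, smul_eq_mul]
    rw [hPsi y hy]
    ring
  have hmain : (∮ y in C(c, r), theta F y * PsiHat F 1 y) = -(K * (2 * ↑Real.pi * I)) := by
    rw [circleIntegral.integral_congr hr.le hEqOn,
      circleIntegral.integral_sub hWint hIint, hW0,
      circleIntegral.integral_smul,
      circleIntegral.integral_sub_center_inv c hr.ne']
    rw [zero_sub, smul_eq_mul]
  have h2pi : (2 * ↑Real.pi * I : ℂ) ≠ 0 := by
    simp [Real.pi_ne_zero, I_ne_zero]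
  have hKfin : K = -(1 / (F * (1 + F))) := by
    have hcval : c = -F / (F + 1) := by
      rw [eq_div_iff ha]; linear_combination hcF
    have hne : F + F ^ 2 ≠ 0 := by
      have h := mul_ne_zero hF0 (show (1 : ℂ) + F ≠ 0 by rwa [add_comm] at ha)
      rwa [show F * (1 + F) = F + F ^ 2 from by ring] at h
    have hT : (F + F ^ 2) * (F + F ^ 2)⁻¹ = 1 := mul_inv_cancel₀ hne
    rw [hKdef, hcval, inv_div]
    field_simp
    rw [add_comm F 1, div_self (by rwa [add_comm] at ha)]
  rw [hmain, hKfin, neg_mul, neg_neg, mul_comm (1 / (F * (1 + F))) _,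
    inv_mul_cancel_left₀ h2pi]
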